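/- Suppose the trials i = 1,…,K are partitioned into regimes g = 1,…,G, and suppose there exists β⋆ ∈ ℝ^p such that, writing ε = y − Zβ⋆ and X = [Z A] (the K×(p+q) matrix with rows X_i), the within-regime weighted orthogonality Σ_{i ∈ g} w_i ε_i X_i = 0 holds for every regime g. Define r_i(β,γ) = y_i − Z_iᵀβ − A_iᵀγ, the average loss L_avg(β,γ) = (Σ_i w_i r_i(β,γ)²)/(Σ_i w_i), the regime losses L_g(β,γ) = (Σ_{i∈g} w_i r_i(β,γ)²)/(Σ_{i∈g} w_i), and the softmax robust loss L_rob(β,γ) = α⁻¹ log Σ_{g=1}^G exp(α L_g(β,γ)) for a fixed α > 0. Then for every ρ ∈ [0,1] and every λ_γ ≥ 0, the point (β⋆, 0) is a global minimizer of the blended objective F(β,γ) = (1−ρ) L_avg(β,γ) + ρ L_rob(β,γ) + λ_γ ‖γ‖²; moreover, if ρ < 1 and the weighted Gram matrix XᵀWX is positive definite, then (β⋆, 0) is the unique global minimizer of F. -/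

import Mathlib

open Matrix BigOperators

/-- Finite-trial consistency of the AMT-MA blended objective with the softmax
(log-sum-exp) robust loss when the anchor is null: under within-regime weighted
orthogonality of the residuals `ε = y - Zβ⋆` to the joint design `X = [Z A]`,
the point `(β⋆, 0)` globally minimises
`F(β,γ) = (1-ρ) L_avg + ρ L_rob + λ_γ ‖γ‖²` for every `ρ ∈ [0,1]`, `λ_γ ≥ 0`;
and if `ρ < 1` and `XᵀWX` is positive definite, it is the unique minimiser. -/
theorem amtma_softmax_consistency_null_anchor
    {K G p q : ℕ}
    (y : Fin K → ℝ) (Z : Matrix (Fin K) (Fin p) ℝ) (A : Matrix (Fin K) (Fin q) ℝ)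
    (w : Fin K → ℝ) (hw : ∀ i, 0 < w i)
    (reg : Fin K → Fin G) (hreg : ∀ g : Fin G, ∃ i, reg i = g)
    (βs : Fin p → ℝ)
    (X : Matrix (Fin K) (Fin (p + q)) ℝ)
    (hX : ∀ i, X i = Fin.append (Z i) (A i))
    (ε : Fin K → ℝ)
    (hε : ∀ i, ε i = y i - ∑ k, Z i k * βs k)
    (horth : ∀ (g : Fin G) (j : Fin (p + q)),
      ∑ i ∈ Finset.univ.filter (fun i => reg i = g), w i * ε i * X i j = 0)
    (α : ℝ) (hα : 0 < α)
    (r : (Fin p → ℝ) → (Fin q → ℝ) → Fin K → ℝ)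
    (hr : ∀ β γ i, r β γ i = y i - ∑ k, Z i k * β k - ∑ k, A i k * γ k)
    (Lavg : (Fin p → ℝ) → (Fin q → ℝ) → ℝ)
    (hLavg : ∀ β γ, Lavg β γ = (∑ i, w i * (r β γ i) ^ 2) / (∑ i, w i))
    (Lg : Fin G → (Fin p → ℝ) → (Fin q → ℝ) → ℝ)
    (hLg : ∀ g β γ, Lg g β γ =
      (∑ i ∈ Finset.univ.filter (fun i => reg i = g), w i * (r β γ i) ^ 2) /
      (∑ i ∈ Finset.univ.filter (fun i => reg i = g), w i))
    (Lrob : (Fin p → ℝ) → (Fin q → ℝ) → ℝ)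
    (hLrob : ∀ β γ, Lrob β γ =
      α⁻¹ * Real.log (∑ g : Fin G, Real.exp (α * Lg g β γ)))
    (ρ lγ : ℝ) (hρ : ρ ∈ Set.Icc (0 : ℝ) 1) (hlγ : 0 ≤ lγ)
    (F : (Fin p → ℝ) → (Fin q → ℝ) → ℝ)
    (hF : ∀ β γ, F β γ =
      (1 - ρ) * Lavg β γ + ρ * Lrob β γ + lγ * ∑ j, (γ j) ^ 2) :
    (∀ β γ, F βs 0 ≤ F β γ) ∧
    (ρ < 1 → (Xᵀ * Matrix.diagonal w * X).PosDef →
      ∀ β γ, (β, γ) ≠ (βs, (0 : Fin q → ℝ)) → F βs 0 < F β γ) := by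
  obtain ⟨hρ0, hρ1⟩ := hρ
  set δ : (Fin p → ℝ) → (Fin q → ℝ) → Fin (p + q) → ℝ :=
    fun β γ => Fin.append (fun k => β k - βs k) γ with hδ
  set t : (Fin p → ℝ) → (Fin q → ℝ) → Fin K → ℝ :=
    fun β γ i => ∑ j, X i j * δ β γ j with ht
  -- residual decomposition
  have hrt : ∀ β γ i, r β γ i = ε i - t β γ i := by
    intro β γ i
    rw [hr, hε, ht]
    simp only [hδ, hX i]
    rw [Fin.sum_univ_add]
    simp only [Fin.append_left, Fin.append_right, mul_sub, Finset.sum_sub_distrib]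
    ring
  have hr0 : ∀ i, r βs 0 i = ε i := by
    intro i; rw [hr, hε]; simp
  -- cross term vanishes on any set where orthogonality holds
  have hcrossS : ∀ (S : Finset (Fin K)),
      (∀ j, ∑ i ∈ S, w i * ε i * X i j = 0) →
      ∀ β γ, ∑ i ∈ S, w i * ε i * t β γ i = 0 := by
    intro S hS β γ
    calc ∑ i ∈ S, w i * ε i * t β γ i
        = ∑ i ∈ S, ∑ j, w i * ε i * X i j * δ β γ j := by
          refine Finset.sum_congr rfl fun i _ => ?_
          rw [ht]; simp only
          rw [Finset.mul_sum]
          exact Finset.sum_congr rfl fun j _ => by ring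
      _ = 0 := by
          rw [Finset.sum_comm]
          refine Finset.sum_eq_zero fun j _ => ?_
          rw [← Finset.sum_mul, hS j, zero_mul]
  have hdecompS : ∀ (S : Finset (Fin K)),
      (∀ j, ∑ i ∈ S, w i * ε i * X i j = 0) →
      ∀ β γ, ∑ i ∈ S, w i * (r β γ i) ^ 2
        = ∑ i ∈ S, w i * (ε i) ^ 2 + ∑ i ∈ S, w i * (t β γ i) ^ 2 := by
    intro S hS β γ
    calc ∑ i ∈ S, w i * (r β γ i) ^ 2
        = ∑ i ∈ S, (w i * (ε i) ^ 2 + w i * (t β γ i) ^ 2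
            - 2 * (w i * ε i * t β γ i)) := by
          refine Finset.sum_congr rfl fun i _ => ?_
          rw [hrt]; ring
      _ = _ := by
          rw [Finset.sum_sub_distrib, Finset.sum_add_distrib, ← Finset.mul_sum,
            hcrossS S hS β γ, mul_zero, sub_zero]
  have horth_all : ∀ j, ∑ i, w i * ε i * X i j = 0 := by
    intro j
    rw [← Finset.sum_fiberwise Finset.univ reg (fun i => w i * ε i * X i j)]
    exact Finset.sum_eq_zero fun g _ => horth g j
  -- nonnegativity of the quadratic parts
  have hQnn : ∀ (S : Finset (Fin K)) β γ, 0 ≤ ∑ i ∈ S, w i * (t β γ i) ^ 2 :=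
    fun S β γ => Finset.sum_nonneg fun i _ => mul_nonneg (hw i).le (sq_nonneg _)
  -- regime denominators
  have hD : ∀ g : Fin G, 0 < ∑ i ∈ Finset.univ.filter (fun i => reg i = g), w i := by
    intro g
    obtain ⟨i0, hi0⟩ := hreg g
    exact Finset.sum_pos (fun i _ => hw i) ⟨i0, by simp [hi0]⟩
  -- regime losses are minimized
  have hLg_le : ∀ (g : Fin G) β γ, Lg g βs 0 ≤ Lg g β γ := by
    intro g β γ
    rw [hLg, hLg, hdecompS _ (horth g) β γ]
    have h0 : ∀ i ∈ Finset.univ.filter (fun i => reg i = g),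
        w i * (r βs 0 i) ^ 2 = w i * (ε i) ^ 2 := fun i _ => by rw [hr0]
    rw [Finset.sum_congr rfl h0]
    exact (div_le_div_iff_of_pos_right (hD g)).mpr
      (le_add_of_nonneg_right (hQnn _ β γ))
  have hLavg_le : ∀ β γ, Lavg βs 0 ≤ Lavg β γ := by
    intro β γ
    rw [hLavg, hLavg, hdecompS _ horth_all β γ]
    have h0 : ∀ i ∈ (Finset.univ : Finset (Fin K)),
        w i * (r βs 0 i) ^ 2 = w i * (ε i) ^ 2 := fun i _ => by rw [hr0]
    rw [Finset.sum_congr rfl h0, div_eq_mul_inv, div_eq_mul_inv]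
    exact mul_le_mul_of_nonneg_right (le_add_of_nonneg_right (hQnn _ β γ))
      (inv_nonneg.2 (Finset.sum_nonneg fun i _ => (hw i).le))
  have hLrob_le : ∀ β γ, Lrob βs 0 ≤ Lrob β γ := by
    intro β γ
    rw [hLrob, hLrob]
    rcases Nat.eq_zero_or_pos G with hG | hG
    · subst hG; simp
    · have hpos : 0 < ∑ g : Fin G, Real.exp (α * Lg g βs 0) :=
        Finset.sum_pos (fun g _ => Real.exp_pos _)
          ⟨⟨0, hG⟩, Finset.mem_univ _⟩
      have hle : ∑ g : Fin G, Real.exp (α * Lg g βs 0)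
          ≤ ∑ g : Fin G, Real.exp (α * Lg g β γ) :=
        Finset.sum_le_sum fun g _ => Real.exp_le_exp.mpr
          (mul_le_mul_of_nonneg_left (hLg_le g β γ) hα.le)
      exact mul_le_mul_of_nonneg_left (Real.log_le_log hpos hle)
        (inv_nonneg.2 hα.le)
  have hpen0 : lγ * ∑ j, ((0 : Fin q → ℝ) j) ^ 2 = 0 := by simp
  constructor
  · intro β γ
    rw [hF, hF, hpen0]
    have h1 : (1 - ρ) * Lavg βs 0 ≤ (1 - ρ) * Lavg β γ :=
      mul_le_mul_of_nonneg_left (hLavg_le β γ) (by linarith)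
    have h2 : ρ * Lrob βs 0 ≤ ρ * Lrob β γ :=
      mul_le_mul_of_nonneg_left (hLrob_le β γ) hρ0
    have h3 : 0 ≤ lγ * ∑ j, γ j ^ 2 :=
      mul_nonneg hlγ (Finset.sum_nonneg fun j _ => sq_nonneg _)
    linarith
  · intro hρlt hPD β γ hne
    have hδne : δ β γ ≠ 0 := by
      intro h0
      apply hne
      have hβ : β = βs := by
        funext a
        have := congrFun h0 (Fin.castAdd q a)
        simp only [hδ, Fin.append_left, Pi.zero_apply] at this
        linarith
      have hγ : γ = 0 := by
        funext b
        have := congrFun h0 (Fin.natAdd p b)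
        simpa [hδ, Fin.append_right] using this
      rw [hβ, hγ]
    have hid : (δ β γ) ⬝ᵥ (Xᵀ * Matrix.diagonal w * X) *ᵥ (δ β γ)
        = ∑ i, w i * (t β γ i) ^ 2 := by
      rw [← Matrix.mulVec_mulVec, ← Matrix.mulVec_mulVec,
        Matrix.dotProduct_mulVec, Matrix.vecMul_transpose]
      simp only [dotProduct, Matrix.mulVec_diagonal]
      refine Finset.sum_congr rfl fun i _ => ?_
      have hXv : (X *ᵥ δ β γ) i = t β γ i := by
        rw [ht]; simp [Matrix.mulVec, dotProduct]
      rw [hXv]; ring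
    have hquad : 0 < ∑ i, w i * (t β γ i) ^ 2 := by
      have h := hPD.dotProduct_mulVec_pos hδne
      have h' : 0 < δ β γ ⬝ᵥ (Xᵀ * Matrix.diagonal w * X) *ᵥ δ β γ := by
        simpa using h
      rwa [hid] at h'
    have hT : 0 < ∑ i, w i := by
      have hKne : (Finset.univ : Finset (Fin K)).Nonempty := by
        rw [Finset.univ_nonempty_iff]
        by_contra hemp
        rw [not_nonempty_iff] at hemp
        haveI := hemp
        simp at hquad
      exact Finset.sum_pos (fun i _ => hw i) hKne
    have hLavg_lt : Lavg βs 0 < Lavg β γ := by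
      rw [hLavg, hLavg, hdecompS _ horth_all β γ]
      have h0 : ∀ i ∈ (Finset.univ : Finset (Fin K)),
          w i * (r βs 0 i) ^ 2 = w i * (ε i) ^ 2 := fun i _ => by rw [hr0]
      rw [Finset.sum_congr rfl h0]
      exact (div_lt_div_iff_of_pos_right hT).mpr (lt_add_of_pos_right _ hquad)
    rw [hF, hF, hpen0]
    have h1 : (1 - ρ) * Lavg βs 0 < (1 - ρ) * Lavg β γ :=
      mul_lt_mul_of_pos_left hLavg_lt (by linarith)
    have h2 : ρ * Lrob βs 0 ≤ ρ * Lrob β γ :=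
      mul_le_mul_of_nonneg_left (hLrob_le β γ) hρ0
    have h3 : 0 ≤ lγ * ∑ j, γ j ^ 2 :=
      mul_nonneg hlγ (Finset.sum_nonneg fun j _ => sq_nonneg _)
    linarith
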